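/- Expected value of the random discretization: for every real v > 0, ∫_0^1 f_r(v) dr = v / (2 ln 2), where the integral is over r with respect to Lebesgue measure on [0,1). -/

import Mathlib

open MeasureTheory Finset

/-- Truncated base-2 logarithm: `log₂†(a) = max(0, min(1, log₂ a))`. -/
noncomputable def logdag (a : ℝ) : ℝ := max 0 (min 1 (Real.logb 2 a))

/-- Random rounding-down function: `f_r(w) = 2^(r+k)` for the unique `k ∈ ℤ` with
`2^(r+k) ≤ w < 2^(r+k+1)`. -/
noncomputable def fr (r w : ℝ) : ℝ := (2 : ℝ) ^ (r + (⌊Real.logb 2 w - r⌋ : ℝ))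

lemma g_periodic : Function.Periodic (fun s : ℝ => (2:ℝ) ^ (-Int.fract s)) 1 := by
  intro s; simp [Int.fract_add_one]

lemma integral_two_rpow_neg : ∫ s in (0:ℝ)..1, (2:ℝ) ^ (-s) = 1 / (2 * Real.log 2) := by
  have hd : ∀ s ∈ Set.uIcc (0:ℝ) 1,
      HasDerivAt (fun s : ℝ => -(2:ℝ) ^ (-s) / Real.log 2) ((2:ℝ) ^ (-s)) s := by
    intro s _
    have h1 : HasDerivAt (fun s : ℝ => (2:ℝ) ^ (-s))
        ((2:ℝ) ^ (-s) * Real.log 2 * (-1)) s := by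
      have := (Real.hasStrictDerivAt_const_rpow (by norm_num : (0:ℝ) < 2) (-s)).hasDerivAt
      exact this.comp s (hasDerivAt_neg s)
    have h2 := (h1.neg).div_const (Real.log 2)
    convert h2 using 1
    have hl : Real.log 2 ≠ 0 := by positivity
    · rfl
    · rfl
    · rfl
    · rw [eq_div_iff (by positivity)]; ring
  have hcont : IntervalIntegrable (fun s : ℝ => (2:ℝ) ^ (-s)) volume 0 1 := by
    apply Continuous.intervalIntegrable
    exact continuous_const.rpow continuous_neg (fun x => Or.inl two_ne_zero)
  rw [intervalIntegral.integral_eq_sub_of_hasDerivAt hd hcont]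
  have hl : Real.log 2 ≠ 0 := by positivity
  rw [Real.rpow_neg_one, Real.rpow_neg zero_le_two, Real.rpow_zero]
  field_simp
  ring

/-- Expected value of the random discretization: `∫_0^1 f_r(v) dr = v / (2 ln 2)`. -/
theorem integral_fr (v : ℝ) (hv : 0 < v) :
    ∫ r in (0:ℝ)..1, fr r v = v / (2 * Real.log 2) := by
  set L := Real.logb 2 v with hL
  have hfr : ∀ r : ℝ, fr r v = v * (2:ℝ) ^ (-Int.fract (L - r)) := by
    intro r
    have hv2 : (2:ℝ) ^ L = v := Real.rpow_logb (by norm_num) (by norm_num) hv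
    rw [fr, ← hL, show r + (⌊L - r⌋ : ℝ) = L + (-Int.fract (L - r)) by
      rw [Int.fract]; push_cast; ring, Real.rpow_add (by norm_num), hv2]
  simp only [hfr]
  rw [intervalIntegral.integral_const_mul]
  have h1 : (∫ r in (0:ℝ)..1, (2:ℝ) ^ (-Int.fract (L - r)))
      = ∫ s in (L-1)..(L-1)+1, (2:ℝ) ^ (-Int.fract s) := by
    rw [intervalIntegral.integral_comp_sub_left (fun s => (2:ℝ) ^ (-Int.fract s)) L]
    norm_num
  have h2 : (∫ s in (L-1)..(L-1)+1, (2:ℝ) ^ (-Int.fract s))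
      = ∫ s in (0:ℝ)..0+1, (2:ℝ) ^ (-Int.fract s) :=
    g_periodic.intervalIntegral_add_eq (L-1) 0
  have h3 : (∫ s in (0:ℝ)..0+1, (2:ℝ) ^ (-Int.fract s)) = ∫ s in (0:ℝ)..1, (2:ℝ) ^ (-s) := by
    rw [zero_add]
    apply intervalIntegral.integral_congr_ae
    have hne : ∀ᵐ s : ℝ, s ≠ 1 := by
      rw [MeasureTheory.ae_iff]
      simp only [ne_eq, not_not, Set.setOf_eq_eq_singleton]
      exact Real.volume_singleton
    filter_upwards [hne] with s hs hmem
    rw [Set.uIoc_of_le (by norm_num : (0:ℝ) ≤ 1)] at hmem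
    rw [Int.fract_eq_self.mpr ⟨hmem.1.le, lt_of_le_of_ne hmem.2 hs⟩]
  rw [h1, h2, h3, integral_two_rpow_neg]
  ring
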